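/- Newton–MacLaurin inequality: if κ ∈ ℝⁿ lies in the Garding cone Γ_k⁺ = {x : E_i(x) > 0 for i = 1,...,k}, then for all 1 ≤ l ≤ k, E_{k+1}(κ) E_{l−1}(κ) ≤ E_l(κ) E_k(κ), with equality if and only if κ_1 = κ_2 = ⋯ = κ_n. -/

import Mathlib

open scoped BigOperators

/-- The normalized `k`-th elementary symmetric function on `ℝⁿ`:
`E_k(κ) = (n choose k)⁻¹ ∑_{i₁<⋯<i_k} κ_{i₁}⋯κ_{i_k}`, with `E_0 = 1`. -/
noncomputable def Ev (n k : ℕ) (κ : Fin n → ℝ) : ℝ :=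
  ((n.choose k : ℝ))⁻¹ *
    ∑ s ∈ Finset.powersetCard k (Finset.univ : Finset (Fin n)), ∏ i ∈ s, κ i

namespace NMaux

open Multiset Polynomial

/-- Normalized elementary symmetric function of a multiset. -/
noncomputable def nE (M : Multiset ℝ) (j : ℕ) : ℝ :=
  (((Multiset.card M).choose j : ℝ))⁻¹ * M.esymm j

/-- The sum of squared differences over all ordered pairs. -/
noncomputable def T (M : Multiset ℝ) : ℝ :=
  (M.bind fun a => M.map fun b => (a - b) ^ 2).sum

lemma esymm_zero' (M : Multiset ℝ) : M.esymm 0 = 1 := by simp [Multiset.esymm]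

lemma NE_zero (M : Multiset ℝ) : nE M 0 = 1 := by simp [nE, esymm_zero']

lemma powersetCard_card (M : Multiset ℝ) : M.powersetCard (Multiset.card M) = {M} := by
  have hc : Multiset.card (M.powersetCard (Multiset.card M)) = 1 := by
    simp
  obtain ⟨a, ha⟩ := Multiset.card_eq_one.mp hc
  have haM : a ∈ M.powersetCard (Multiset.card M) := by simp [ha]
  rw [Multiset.mem_powersetCard] at haM
  have : a = M := Multiset.eq_of_le_of_card_le haM.1 (le_of_eq haM.2.symm)
  rw [ha, this]

lemma esymm_card (M : Multiset ℝ) : M.esymm (Multiset.card M) = M.prod := by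
  rw [Multiset.esymm, powersetCard_card]; simp

lemma esymm_of_lt (M : Multiset ℝ) {k : ℕ} (h : Multiset.card M < k) : M.esymm k = 0 := by
  rw [Multiset.esymm, Multiset.powersetCard_eq_empty _ h]; simp

lemma esymm_cons (a : ℝ) (M : Multiset ℝ) (k : ℕ) :
    (a ::ₘ M).esymm (k + 1) = M.esymm (k + 1) + a * M.esymm k := by
  rw [Multiset.esymm, Multiset.powersetCard_cons, Multiset.map_add, Multiset.sum_add,
    Multiset.map_map]
  congr 1
  rw [Multiset.esymm, ← Multiset.sum_map_mul_left]
  congr 1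
  apply Multiset.map_congr rfl
  intro t _
  simp [Multiset.prod_cons]

lemma esymm_replicate (r k : ℕ) (c : ℝ) (hk : k ≤ r) :
    (Multiset.replicate r c).esymm k = (r.choose k : ℝ) * c ^ k := by
  rw [Multiset.esymm]
  have h : ∀ t ∈ (Multiset.replicate r c).powersetCard k, t.prod = c ^ k := by
    intro t ht
    rw [Multiset.mem_powersetCard] at ht
    have : t = Multiset.replicate (Multiset.card t) c :=
      Multiset.eq_replicate_card.mpr fun b hb =>
        Multiset.eq_of_mem_replicate (Multiset.mem_of_le ht.1 hb)
    rw [this, ht.2, Multiset.prod_replicate]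
  rw [Multiset.map_congr rfl h, Multiset.map_const', Multiset.sum_replicate]
  simp [Multiset.card_replicate, nsmul_eq_mul]

lemma NE_replicate (r k : ℕ) (c : ℝ) (hk : k ≤ r) :
    nE (Multiset.replicate r c) k = c ^ k := by
  have h0 : ((r.choose k : ℝ)) ≠ 0 := Nat.cast_ne_zero.mpr (Nat.choose_pos hk).ne'
  rw [nE, Multiset.card_replicate, esymm_replicate r k c hk, ← mul_assoc, inv_mul_cancel₀ h0,
    one_mul]

lemma sum_map_lin (M : Multiset ℝ) (A B C : ℝ) :
    (M.map fun x => A * x ^ 2 + B * x + C).sum =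
      A * (M.map fun y => y ^ 2).sum + B * M.sum + (Multiset.card M : ℝ) * C := by
  induction M using Multiset.induction_on with
  | empty => simp
  | cons a s ih => simp [ih]; push_cast; ring

lemma sum_map_sq_sub (M : Multiset ℝ) (x : ℝ) :
    (M.map fun y => (x - y) ^ 2).sum =
      (Multiset.card M : ℝ) * x ^ 2 - 2 * x * M.sum + (M.map fun y => y ^ 2).sum := by
  induction M using Multiset.induction_on with
  | empty => simp
  | cons a s ih => simp [ih]; push_cast; ring

lemma T_id (M : Multiset ℝ) :
    T M = 2 * (Multiset.card M : ℝ) * (M.map fun y => y ^ 2).sum - 2 * M.sum ^ 2 := by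
  rw [T, Multiset.sum_bind]
  have h : ∀ x ∈ M, ((M.map fun y => (x - y) ^ 2).sum) =
      (Multiset.card M : ℝ) * x ^ 2 + (- 2 * M.sum) * x + (M.map fun y => y ^ 2).sum := by
    intro x _
    rw [sum_map_sq_sub M x]; ring
  rw [Multiset.map_congr rfl h, sum_map_lin]
  ring

lemma T_nonneg (M : Multiset ℝ) : 0 ≤ T M := by
  apply Multiset.sum_nonneg
  intro x hx
  rw [Multiset.mem_bind] at hx
  obtain ⟨a, _, hx⟩ := hx
  rw [Multiset.mem_map] at hx
  obtain ⟨b, _, rfl⟩ := hx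
  positivity

lemma T_eq_zero_iff (M : Multiset ℝ) : T M = 0 ↔ ∀ a ∈ M, ∀ b ∈ M, a = b := by
  constructor
  · intro h a ha b hb
    have hmem : (a - b) ^ 2 ∈ M.bind fun a => M.map fun b => (a - b) ^ 2 := by
      rw [Multiset.mem_bind]
      exact ⟨a, ha, Multiset.mem_map.mpr ⟨b, hb, rfl⟩⟩
    have hnn : ∀ x ∈ M.bind fun a => M.map fun b => (a - b) ^ 2, (0:ℝ) ≤ x := by
      intro x hx
      rw [Multiset.mem_bind] at hx
      obtain ⟨c, _, hx⟩ := hx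
      rw [Multiset.mem_map] at hx
      obtain ⟨d, _, rfl⟩ := hx
      positivity
    have hle := Multiset.single_le_sum hnn _ hmem
    rw [show (M.bind fun a => M.map fun b => (a - b) ^ 2).sum = T M from rfl, h] at hle
    have := sq_nonneg (a - b)
    have : (a - b) ^ 2 = 0 := le_antisymm hle this
    have := pow_eq_zero_iff (n := 2) (by norm_num) |>.mp this
    linarith [sub_eq_zero.mp this]
  · intro h
    apply Multiset.sum_eq_zero
    intro x hx
    rw [Multiset.mem_bind] at hx
    obtain ⟨a, ha, hx⟩ := hx
    rw [Multiset.mem_map] at hx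
    obtain ⟨b, hb, rfl⟩ := hx
    rw [h a ha b hb]; ring

lemma esymm_inv (M : Multiset ℝ) (h0 : (0:ℝ) ∉ M) :
    ∀ i j : ℕ, i + j = Multiset.card M →
      M.esymm i = M.prod * (M.map fun x => x⁻¹).esymm j := by
  induction M using Multiset.induction_on with
  | empty =>
    intro i j hij
    simp at hij
    obtain ⟨rfl, rfl⟩ := hij
    simp [esymm_zero']
  | cons a s ih =>
    intro i j hij
    have ha : a ≠ 0 := fun h => h0 (h ▸ Multiset.mem_cons_self a s)
    have h0s : (0:ℝ) ∉ s := fun h => h0 (Multiset.mem_cons_of_mem h)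
    have hprod : s.prod ≠ 0 := fun h => h0s (Multiset.prod_eq_zero_iff.mp h)
    rw [Multiset.card_cons] at hij
    rw [Multiset.map_cons, Multiset.prod_cons]
    rcases i with _ | i'
    · -- i = 0, j = card s + 1
      have hj : j = Multiset.card s + 1 := by omega
      subst hj
      rw [esymm_zero', show Multiset.card s + 1 =
        Multiset.card (a⁻¹ ::ₘ s.map fun x => x⁻¹) by simp, esymm_card]
      rw [Multiset.prod_cons]
      have : (s.map fun x => x⁻¹).prod = s.prod⁻¹ := by
        simpa using (Multiset.prod_map_inv (m := s) (f := id))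
      rw [this]
      field_simp
    · rw [esymm_cons]
      rcases j with _ | j'
      · -- j = 0 : i' + 1 = card s + 1
        have hi : i' = Multiset.card s := by omega
        subst hi
        rw [esymm_of_lt s (by omega), esymm_card, esymm_zero']
        ring
      · rw [esymm_cons]
        have h1 := ih h0s (i' + 1) j' (by omega)
        have h2 := ih h0s i' (j' + 1) (by omega)
        rw [h1, h2]
        field_simp
        ring
  
lemma esymm_one' (M : Multiset ℝ) : M.esymm 1 = M.sum := by
  induction M using Multiset.induction_on with
  | empty => simp [Multiset.esymm, Multiset.powersetCard_zero_right]
  | cons a s ih => rw [show (1:ℕ) = 0 + 1 from rfl, esymm_cons, ih]; simp [Multiset.esymm]; ring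

lemma two_esymm_two (M : Multiset ℝ) :
    2 * M.esymm 2 = M.sum ^ 2 - (M.map fun y => y ^ 2).sum := by
  induction M using Multiset.induction_on with
  | empty => simp [Multiset.esymm, Multiset.powersetCard_zero_right]
  | cons a s ih =>
    rw [show (2:ℕ) = 1 + 1 from rfl, esymm_cons, esymm_one',
      show (1:ℕ) + 1 = 2 from rfl]
    simp only [Multiset.sum_cons, Multiset.map_cons, Multiset.sum_cons]
    nlinarith [ih]

lemma key_id (n : ℕ) (S S2 e2 C : ℝ)
    (hC : 2 * C = n * ((n:ℝ) - 1)) (hC0 : C ≠ 0) (hn0 : (n:ℝ) ≠ 0)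
    (hA : 2 * e2 = S ^ 2 - S2) :
    2 * (n : ℝ) ^ 2 * ((n : ℝ) - 1) * (C⁻¹ * e2) =
      2 * (n:ℝ)^2 * ((n:ℝ)-1) * (((n:ℝ)⁻¹ * S)^2) - (2 * n * S2 - 2 * S ^ 2) := by
  field_simp
  linear_combination (-(n:ℝ)*e2) * hC + (C*(n:ℝ)) * hA

lemma choose_two_mul (n : ℕ) (h2 : 2 ≤ n) : 2 * ((n.choose 2 : ℕ) : ℝ) = n * ((n:ℝ) - 1) := by
  have hCnat : 2 * n.choose 2 = n * (n - 1) := by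
    obtain ⟨m, hm⟩ : ∃ m, n = m + 1 := ⟨n - 1, by omega⟩
    subst hm
    have := Nat.add_one_mul_choose_eq m 1
    simp only [Nat.choose_one_right, Nat.succ_eq_add_one, show (1:ℕ)+1 = 2 from rfl] at this
    rw [show m + 1 - 1 = m from rfl]
    omega
  have := congrArg (fun x : ℕ => (x : ℝ)) hCnat
  push_cast at this
  rw [this, Nat.cast_sub (by omega)]
  push_cast; ring

lemma newton_one_id (M : Multiset ℝ) (h2 : 2 ≤ Multiset.card M) :
    2 * (Multiset.card M : ℝ) ^ 2 * ((Multiset.card M : ℝ) - 1) *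
      (nE M 1 ^ 2 - nE M 2) = T M := by
  set n := Multiset.card M with hn
  have h1 : ((n.choose 1 : ℕ) : ℝ) = (n : ℝ) := by norm_num
  have hC0 : ((n.choose 2 : ℕ) : ℝ) ≠ 0 := Nat.cast_ne_zero.mpr (Nat.choose_pos h2).ne'
  have hn0 : (n : ℝ) ≠ 0 := Nat.cast_ne_zero.mpr (by omega)
  have key := key_id n M.sum ((M.map fun y => y ^ 2).sum) (M.esymm 2) ((n.choose 2 : ℕ) : ℝ)
    (choose_two_mul n h2) hC0 hn0 (two_esymm_two M)
  have hT := T_id M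
  rw [nE, nE, esymm_one', h1, ← hn] at *
  linarith

lemma newton_one (M : Multiset ℝ) (h2 : 2 ≤ Multiset.card M) :
    nE M 2 ≤ nE M 1 ^ 2 ∧ (nE M 1 ^ 2 = nE M 2 ↔ ∀ a ∈ M, ∀ b ∈ M, a = b) := by
  have hid := newton_one_id M h2
  have hpos : 0 < 2 * (Multiset.card M : ℝ) ^ 2 * ((Multiset.card M : ℝ) - 1) := by
    have : (2:ℝ) ≤ (Multiset.card M : ℝ) := by exact_mod_cast h2
    nlinarith
  constructor
  · nlinarith [T_nonneg M]
  · rw [← T_eq_zero_iff]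
    constructor
    · intro h; rw [← hid, h]; ring
    · intro h; rw [h] at hid; nlinarith

lemma NE_card (M : Multiset ℝ) : nE M (Multiset.card M) = M.prod := by
  rw [nE, esymm_card, Nat.choose_self]; simp

lemma newton_base (M : Multiset ℝ) (m : ℕ) (hm : 1 ≤ m) (hcard : Multiset.card M = m + 1) :
    nE M (m-1) * nE M (m+1) ≤ nE M m ^ 2 ∧
    (nE M (m+1) ≠ 0 →
      (nE M (m-1) * nE M (m+1) = nE M m ^ 2 ↔ ∀ a ∈ M, ∀ b ∈ M, a = b)) := by
  have hprodNE : nE M (m+1) = M.prod := by rw [← hcard, NE_card]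
  by_cases hz : nE M (m+1) = 0
  · refine ⟨by rw [hz]; simpa using sq_nonneg (nE M m), fun h => absurd hz h⟩
  · have hprod : M.prod ≠ 0 := by rwa [hprodNE] at hz
    have h0 : (0:ℝ) ∉ M := fun h => hprod (Multiset.prod_eq_zero h)
    set y := M.map fun x => x⁻¹ with hy
    have hycard : Multiset.card y = m + 1 := by rw [hy, Multiset.card_map, hcard]
    have hEm : nE M m = M.prod * nE y 1 := by
      rw [nE, nE, esymm_inv M h0 m 1 (by omega), hycard, hcard, Nat.choose_one_right,
        Nat.choose_succ_self_right]
      ring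
    have hEm1 : nE M (m-1) = M.prod * nE y 2 := by
      have h := esymm_inv M h0 (m-1) 2 (by omega)
      rw [nE, nE, h, hycard, hcard]
      have hch : (m+1).choose (m-1) = (m+1).choose 2 := by
        rw [show m - 1 = (m+1) - 2 by omega]
        exact Nat.choose_symm (by omega)
      rw [hch]; ring
    have hN1 := newton_one y (by omega)
    have hsq : (0:ℝ) < M.prod ^ 2 := by positivity
    constructor
    · rw [hEm1, hEm, hprodNE]
      nlinarith [hN1.1]
    · intro _
      rw [hEm1, hEm, hprodNE]
      have hiff := hN1.2
      constructor
      · intro h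
        have heq : nE y 1 ^ 2 = nE y 2 := by nlinarith
        intro a ha b hb
        have := hiff.mp heq a⁻¹ (Multiset.mem_map_of_mem _ ha) b⁻¹
          (Multiset.mem_map_of_mem _ hb)
        have ha0 : a ≠ 0 := fun hh => h0 (hh ▸ ha)
        have hb0 : b ≠ 0 := fun hh => h0 (hh ▸ hb)
        field_simp at this
        exact this.symm
      · intro h
        have : ∀ u ∈ y, ∀ v ∈ y, u = v := by
          intro u hu v hv
          obtain ⟨a, ha, rfl⟩ := Multiset.mem_map.mp hu
          obtain ⟨b, hb, rfl⟩ := Multiset.mem_map.mp hv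
          rw [h a ha b hb]
        have heq := hiff.mpr this
        nlinarith

lemma choose_mul_id {n j : ℕ} (hj : j ≤ n - 1) (hn : 1 ≤ n) :
    (n - j) * n.choose j = n * (n-1).choose j := by
  have h1 : n.choose j * j.factorial * (n - j).factorial = n.factorial :=
    Nat.choose_mul_factorial_mul_factorial (by omega)
  have h2 : (n-1).choose j * j.factorial * (n - 1 - j).factorial = (n-1).factorial :=
    Nat.choose_mul_factorial_mul_factorial (by omega)
  have h3 : (n - j).factorial = (n - j) * (n - 1 - j).factorial := by
    rw [show n - j = (n - 1 - j) + 1 by omega, Nat.factorial_succ]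
  have h4 : n.factorial = n * (n-1).factorial := by
    rw [show n = (n - 1) + 1 by omega, Nat.factorial_succ]
    congr 1 <;> omega
  have key : ((n - j) * n.choose j) * (j.factorial * (n - 1 - j).factorial)
      = (n * (n-1).choose j) * (j.factorial * (n - 1 - j).factorial) := by
    calc ((n - j) * n.choose j) * (j.factorial * (n - 1 - j).factorial)
        = n.choose j * j.factorial * ((n - j) * (n - 1 - j).factorial) := by ring
      _ = n.choose j * j.factorial * (n - j).factorial := by rw [h3]
      _ = n.factorial := h1
      _ = n * (n-1).factorial := h4
      _ = n * ((n-1).choose j * j.factorial * (n - 1 - j).factorial) := by rw [h2]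
      _ = (n * (n-1).choose j) * (j.factorial * (n - 1 - j).factorial) := by ring
  exact Nat.eq_of_mul_eq_mul_right (by positivity) key

lemma derive_step (M : Multiset ℝ) (n : ℕ) (hM : Multiset.card M = n) (hn : 2 ≤ n) :
    ∃ M' : Multiset ℝ, Multiset.card M' = n - 1 ∧ ∀ j ≤ n - 1, nE M' j = nE M j := by
  set p := (M.map fun a => X - C a).prod with hp
  have hmonic : p.Monic :=
    monic_multiset_prod_of_monic _ _ fun a _ => monic_X_sub_C a
  have hdeg : p.natDegree = n := by
    rw [hp, natDegree_multiset_prod_X_sub_C_eq_card, hM]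
  have hroots : p.roots = M := roots_multiset_prod_X_sub_C M
  set q := derivative p with hq
  have hqc : q.coeff (n - 1) = n := by
    rw [hq, coeff_derivative, show n - 1 + 1 = n by omega, ← hdeg,
      hmonic.coeff_natDegree]
    push_cast [show n - 1 + 1 = n by omega]
    simp
    rw [Nat.cast_sub (by omega)]
    ring
  have hqcne : q.coeff (n-1) ≠ 0 := by rw [hqc]; positivity
  have hqdeg : q.natDegree = n - 1 := by
    have hle : q.natDegree ≤ n - 1 := by
      have h := natDegree_derivative_le p
      rw [hdeg] at h
      exact h
    exact le_antisymm hle (le_natDegree_of_ne_zero hqcne)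
  have hlead : q.leadingCoeff = n := by rw [leadingCoeff, hqdeg, hqc]
  have hqroots : Multiset.card q.roots = n - 1 := by
    have h1 : Multiset.card q.roots ≤ n - 1 := hqdeg ▸ q.card_roots'
    have h2 := p.card_roots_le_derivative
    rw [hroots, hM, ← hq] at h2
    omega
  refine ⟨q.roots, hqroots, fun j hj => ?_⟩
  have hA : q.coeff (n - 1 - j) = (n : ℝ) * ((-1) ^ j * q.roots.esymm j) := by
    have := Polynomial.coeff_eq_esymm_roots_of_card (p := q) (by rw [hqroots, hqdeg])
      (k := n - 1 - j) (by omega)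
    rw [this, hlead, hqdeg, show n - 1 - (n - 1 - j) = j by omega]
    ring
  have hB : q.coeff (n - 1 - j) = ((n : ℝ) - j) * ((-1) ^ j * M.esymm j) := by
    rw [hq, coeff_derivative, show n - 1 - j + 1 = n - j by omega]
    have hC : p.coeff (n - j) = (-1) ^ j * M.esymm j := by
      have := Multiset.prod_X_sub_C_coeff M (k := n - j) (by omega)
      rw [← hp] at this
      rw [this, hM, show n - (n - j) = j by omega]
    have e2 : ((n - 1 - j : ℕ) : ℝ) = (n : ℝ) - (j:ℝ) - 1 := by
      rw [Nat.cast_sub (by omega), Nat.cast_sub (by omega)]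
      push_cast; ring
    rw [hC, e2]
    ring
  have hesymm : (n:ℝ) * q.roots.esymm j = ((n:ℝ) - j) * M.esymm j := by
    have h := hA.symm.trans hB
    have hss : ((-1:ℝ)^j) * ((-1:ℝ)^j) = 1 := by
      rw [← pow_add, ← two_mul, pow_mul]; norm_num
    linear_combination ((-1:ℝ)^j) * h -
      ((n:ℝ) * q.roots.esymm j - ((n:ℝ) - (j:ℝ)) * M.esymm j) * hss
  -- now the normalized statement
  have hch : ((n:ℝ) - (j:ℝ)) * (n.choose j : ℝ) = (n:ℝ) * (((n-1).choose j : ℕ) : ℝ) := by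
    have h := congrArg (fun x : ℕ => (x:ℝ)) (choose_mul_id hj (by omega))
    simp only [Nat.cast_mul] at h
    rw [Nat.cast_sub (by omega : j ≤ n)] at h
    exact h
  have hc1 : ((n.choose j : ℕ) : ℝ) ≠ 0 := Nat.cast_ne_zero.mpr (Nat.choose_pos (by omega)).ne'
  have hc2 : (((n-1).choose j : ℕ) : ℝ) ≠ 0 := Nat.cast_ne_zero.mpr (Nat.choose_pos hj).ne'
  have hn0 : (n:ℝ) ≠ 0 := Nat.cast_ne_zero.mpr (by omega)
  rw [nE, nE, hqroots, hM]
  have h5 : (n:ℝ) * (q.roots.esymm j * (n.choose j : ℝ)) =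
      (n:ℝ) * (M.esymm j * (((n-1).choose j : ℕ) : ℝ)) := by
    linear_combination (n.choose j : ℝ) * hesymm + (M.esymm j) * hch
  have h6 := mul_left_cancel₀ hn0 h5
  field_simp
  linarith [h6]
lemma const_eq_replicate {M : Multiset ℝ} (hne : 0 < Multiset.card M)
    (h : ∀ a ∈ M, ∀ b ∈ M, a = b) :
    ∃ c : ℝ, M = Multiset.replicate (Multiset.card M) c := by
  obtain ⟨c, hc⟩ := Multiset.card_pos_iff_exists_mem.mp hne
  exact ⟨c, Multiset.eq_replicate_card.mpr fun b hb => h b hb c hc⟩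

lemma newton_gen : ∀ d : ℕ, ∀ M : Multiset ℝ, ∀ m : ℕ, 1 ≤ m →
    Multiset.card M = m + 1 + d →
    nE M (m-1) * nE M (m+1) ≤ nE M m ^ 2 ∧
    (nE M (m+1) ≠ 0 →
      (nE M (m-1) * nE M (m+1) = nE M m ^ 2 ↔ ∀ a ∈ M, ∀ b ∈ M, a = b)) := by
  intro d
  induction d with
  | zero => exact fun M m hm hcard => newton_base M m hm hcard
  | succ d ih =>
    intro M m hm hcard
    obtain ⟨M', hcard', hNE⟩ := derive_step M (m + 1 + (d+1)) hcard (by omega)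
    have hcard'' : Multiset.card M' = m + 1 + d := by omega
    have e1 : nE M' (m-1) = nE M (m-1) := hNE (m-1) (by omega)
    have e2 : nE M' m = nE M m := hNE m (by omega)
    have e3 : nE M' (m+1) = nE M (m+1) := hNE (m+1) (by omega)
    have IH := ih M' m hm hcard''
    constructor
    · rw [← e1, ← e2, ← e3]; exact IH.1
    · intro hne
      constructor
      · intro heq
        have hM'const : ∀ a ∈ M', ∀ b ∈ M', a = b := by
          apply (IH.2 (by rw [e3]; exact hne)).mp
          rw [e1, e2, e3]; exact heq
        obtain ⟨c, hc⟩ := const_eq_replicate (by omega) hM'const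
        rw [hcard''] at hc
        have h1 : nE M 1 = c := by
          rw [← hNE 1 (by omega), hc, NE_replicate _ _ _ (by omega), pow_one]
        have h2 : nE M 2 = c ^ 2 := by
          rw [← hNE 2 (by omega), hc, NE_replicate _ _ _ (by omega)]
        apply (newton_one M (by omega)).2.mp
        rw [h1, h2]
      · intro h
        obtain ⟨c, hc⟩ := const_eq_replicate (by omega) h
        rw [hcard] at hc
        rw [hc, NE_replicate _ _ _ (by omega), NE_replicate _ _ _ (by omega),
          NE_replicate _ _ _ (by omega), ← pow_add, ← pow_mul,
          show m - 1 + (m+1) = 2 * m by omega]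
        ring

lemma newton (M : Multiset ℝ) (m : ℕ) (hm : 1 ≤ m) (h : m + 1 ≤ Multiset.card M) :
    nE M (m-1) * nE M (m+1) ≤ nE M m ^ 2 ∧
    (nE M (m+1) ≠ 0 →
      (nE M (m-1) * nE M (m+1) = nE M m ^ 2 ↔ ∀ a ∈ M, ∀ b ∈ M, a = b)) :=
  newton_gen (Multiset.card M - (m+1)) M m hm (by omega)

end NMaux

open NMaux

/-- Newton–MacLaurin inequality: if `κ` lies in the Garding cone
`Γ_k⁺ = {x : E_i(x) > 0, i = 1,…,k}`, then for all `1 ≤ l ≤ k` one has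
`E_{k+1}(κ) E_{l-1}(κ) ≤ E_l(κ) E_k(κ)`, with equality iff all `κ_i` coincide. -/
theorem newton_maclaurin (n k : ℕ) (hk : 1 ≤ k) (hkn : k + 1 ≤ n)
    (κ : Fin n → ℝ) (hκ : ∀ i, 1 ≤ i → i ≤ k → 0 < Ev n i κ)
    (l : ℕ) (hl : 1 ≤ l) (hlk : l ≤ k) :
    Ev n (k + 1) κ * Ev n (l - 1) κ ≤ Ev n l κ * Ev n k κ ∧
      (Ev n (k + 1) κ * Ev n (l - 1) κ = Ev n l κ * Ev n k κ ↔
        ∀ i j : Fin n, κ i = κ j) := by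
  classical
  set M : Multiset ℝ := (Finset.univ.val : Multiset (Fin n)).map κ with hM
  have hcard : Multiset.card M = n := by
    rw [hM, Multiset.card_map]
    simp
  have bridge : ∀ j, Ev n j κ = nE M j := by
    intro j
    rw [Ev, nE, hcard, hM, Finset.esymm_map_val]
  have pos : ∀ j, j ≤ k → 0 < nE M j := by
    intro j hj
    rcases Nat.eq_zero_or_pos j with rfl | hj1
    · rw [NE_zero]; norm_num
    · rw [← bridge]; exact hκ j hj1 hj
  have hmem : ∀ i : Fin n, κ i ∈ M := fun i =>
    Multiset.mem_map_of_mem κ (Finset.mem_univ i)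
  have hMeq : (∀ a ∈ M, ∀ b ∈ M, a = b) ↔ ∀ i j : Fin n, κ i = κ j := by
    constructor
    · intro h i j; exact h _ (hmem i) _ (hmem j)
    · intro h a ha b hb
      obtain ⟨i, _, rfl⟩ := Multiset.mem_map.mp ha
      obtain ⟨j, _, rfl⟩ := Multiset.mem_map.mp hb
      exact h i j
  have newtonM : ∀ m, 1 ≤ m → m ≤ k →
      nE M (m-1) * nE M (m+1) ≤ nE M m ^ 2 ∧
      (nE M (m+1) ≠ 0 →
        (nE M (m-1) * nE M (m+1) = nE M m ^ 2 ↔ ∀ a ∈ M, ∀ b ∈ M, a = b)) :=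
    fun m hm hmk => newton M m hm (by omega)
  -- the telescoping chain
  have chain : ∀ m, l ≤ m → m ≤ k →
      nE M (m+1) * nE M (l-1) ≤ nE M l * nE M m := by
    refine Nat.le_induction ?_ ?_
    · intro hlk'
      have N := (newtonM l hl hlk').1
      have hll : l - 1 + 1 = l := by omega
      nlinarith [N, pos (l-1) (by omega), pos l hlk']
    · intro m hlm IH hmk
      have H := IH (by omega)
      have N := (newtonM (m+1) (by omega) hmk).1
      rw [show m + 1 - 1 = m from by omega] at N
      have posl1 := pos (l-1) (by omega)
      have posl := pos l (by omega)
      have posm := pos m (by omega)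
      have posm1 := pos (m+1) hmk
      rcases le_or_gt (nE M (m+1+1)) 0 with hs | hs
      · have h1 : nE M (m+1+1) * nE M (l-1) ≤ 0 :=
          mul_nonpos_of_nonpos_of_nonneg hs posl1.le
        nlinarith [mul_pos posl posm1]
      · have t1 : nE M (m+1+1) * (nE M (m+1) * nE M (l-1)) ≤
            nE M (m+1+1) * (nE M l * nE M m) :=
          mul_le_mul_of_nonneg_left H hs.le
        have t2 : nE M l * (nE M m * nE M (m+1+1)) ≤ nE M l * nE M (m+1) ^ 2 := by
          apply mul_le_mul_of_nonneg_left _ posl.le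
          nlinarith [N]
        have h7 : nE M (m+1) * (nE M (m+1+1) * nE M (l-1)) ≤
            nE M (m+1) * (nE M l * nE M (m+1)) := by nlinarith [t1, t2]
        exact le_of_mul_le_mul_left h7 posm1
  have mainineq : nE M (k+1) * nE M (l-1) ≤ nE M l * nE M k := chain k hlk le_rfl
  rw [bridge, bridge, bridge, bridge]
  refine ⟨mainineq, ?_⟩
  rcases le_or_gt (nE M (k+1)) 0 with hsign | hsign
  · -- strict inequality case, both sides of iff false
    have hstrict : nE M (k+1) * nE M (l-1) < nE M l * nE M k := by
      have h1 : nE M (k+1) * nE M (l-1) ≤ 0 :=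
        mul_nonpos_of_nonpos_of_nonneg hsign (pos (l-1) (by omega)).le
      have h2 : 0 < nE M l * nE M k := mul_pos (pos l hlk) (pos k le_rfl)
      linarith
    constructor
    · intro heq; exact absurd heq (ne_of_lt hstrict)
    · intro hall
      exfalso
      obtain ⟨c, hc⟩ := const_eq_replicate (by omega) (hMeq.mpr hall)
      rw [hcard] at hc
      have h1 : nE M 1 = c := by
        rw [hc, NE_replicate _ _ _ (by omega), pow_one]
      have hcpos : 0 < c := h1 ▸ pos 1 hk
      have h2 : nE M (k+1) = c^(k+1) := by
        rw [hc, NE_replicate _ _ _ (by omega)]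
      nlinarith [pow_pos hcpos (k+1)]
  · constructor
    · intro heq
      -- derive Newton equality at k
      have heqk : nE M (k-1) * nE M (k+1) = nE M k ^ 2 := by
        rcases eq_or_lt_of_le hlk with rfl | hlk'
        · have : l - 1 = l - 1 := rfl
          nlinarith [heq]
        · have C1 := chain (k-1) (by omega) (by omega)
          rw [show k - 1 + 1 = k from by omega] at C1
          have posl := pos l (by omega)
          have t1 : nE M (k+1) * (nE M k * nE M (l-1)) ≤
              nE M (k+1) * (nE M l * nE M (k-1)) :=
            mul_le_mul_of_nonneg_left C1 hsign.le
          have t2 : nE M k * (nE M (k+1) * nE M (l-1)) = nE M k * (nE M l * nE M k) := by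
            rw [heq]
          have h7 : nE M l * nE M k ^ 2 ≤ nE M l * (nE M (k-1) * nE M (k+1)) := by
            nlinarith [t1, t2]
          have h8 : nE M k ^ 2 ≤ nE M (k-1) * nE M (k+1) :=
            le_of_mul_le_mul_left h7 posl
          exact le_antisymm (newtonM k hk le_rfl).1 h8
      have hall := ((newtonM k hk le_rfl).2 hsign.ne').mp heqk
      exact hMeq.mp hall
    · intro hall
      obtain ⟨c, hc⟩ := const_eq_replicate (by omega) (hMeq.mpr hall)
      rw [hcard] at hc
      rw [hc, NE_replicate _ _ _ (by omega), NE_replicate _ _ _ (by omega),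
        NE_replicate _ _ _ (by omega), NE_replicate _ _ _ (by omega),
        ← pow_add, ← pow_add, show k + 1 + (l-1) = l + k from by omega]
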